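/- Let r > 0 and suppose the measure π₀ = h₁·π is r-invariant for X, where h₁ : E → [0,∞] is Borel and locally π-integrable. Let w : E → [0,∞) be a continuous, compactly supported function that is not identically 0, and define h(x) = ∫_E w(y)·h₁(yx) π(dy). Then h is finite everywhere, continuous on E, not identically zero, and the measure μ = h·π is r-invariant for X. -/

import Mathlib

open MeasureTheory ENNReal

noncomputable section

/-- Convolution of two Borel measures on a group. -/
def mconv {E : Type*} [Monoid E] [MeasurableSpace E] (μ ν : Measure E) : Measure E :=
  (μ.prod ν).map (fun p => p.1 * p.2)

/-- A nonzero measure `ν` is `r`-invariant for the right random walk with law `v`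
if `ν = r · (ν * v)`. -/
def IsRInvMeasure {E : Type*} [Monoid E] [MeasurableSpace E]
    (r : ℝ) (v ν : Measure E) : Prop :=
  ν ≠ 0 ∧ ν = ENNReal.ofReal r • mconv ν v

open Pointwise

section Aux

variable {E : Type*} [TopologicalSpace E] [Group E] [IsTopologicalGroup E]
    [SecondCountableTopology E] [MeasurableSpace E] [BorelSpace E]

lemma mconv_withDensity_apply (π : Measure E) [SigmaFinite π] [π.IsMulRightInvariant]
    (v : Measure E) [IsFiniteMeasure v] {g : E → ℝ≥0∞} (hg : Measurable g)
    {A : Set E} (hA : MeasurableSet A) :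
    mconv (π.withDensity g) v A = ∫⁻ x in A, ∫⁻ b, g (x * b⁻¹) ∂v ∂π := by
  set I : E → ℝ≥0∞ := A.indicator 1 with hI
  have hImeas : Measurable I := measurable_one.indicator hA
  have hmul : Measurable fun p : E × E => p.1 * p.2 := measurable_mul
  have h1 : mconv (π.withDensity g) v A
      = ∫⁻ x, ∫⁻ b, I (x * b) ∂v ∂(π.withDensity g) := by
    rw [mconv, Measure.map_apply hmul hA, ← lintegral_indicator_one (hmul hA)]
    have heq : ((fun p : E × E => p.1 * p.2) ⁻¹' A).indicator (1 : E × E → ℝ≥0∞)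
        = fun p : E × E => I (p.1 * p.2) := by
      ext p
      by_cases h : p.1 * p.2 ∈ A <;> simp [hI, Set.indicator_apply, h, Set.mem_preimage]
    rw [heq, lintegral_prod (fun p : E × E => I (p.1 * p.2))
      ((hImeas.comp hmul).aemeasurable)]
  have hFmeas : Measurable fun x => ∫⁻ b, I (x * b) ∂v :=
    Measurable.lintegral_prod_right (f := fun x b => I (x * b)) (hImeas.comp measurable_mul)
  rw [h1, lintegral_withDensity_eq_lintegral_mul π hg hFmeas]
  have h2 : ∫⁻ x, (g * fun x => ∫⁻ b, I (x * b) ∂v) x ∂π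
      = ∫⁻ x, ∫⁻ b, g x * I (x * b) ∂v ∂π := by
    refine lintegral_congr fun x => ?_
    simp only [Pi.mul_apply]
    exact (lintegral_const_mul (g x)
      (hImeas.comp (measurable_const_mul x) : Measurable fun b => I (x * b))).symm
  rw [h2, lintegral_lintegral_swap
    (((hg.comp measurable_fst).mul (hImeas.comp measurable_mul)
      : Measurable (Function.uncurry fun x b => g x * I (x * b))).aemeasurable)]
  have h3 : ∀ b : E, ∫⁻ x, g x * I (x * b) ∂π = ∫⁻ x, g (x * b⁻¹) * I x ∂π := by
    intro b
    have := lintegral_mul_right_eq_self (μ := π) (fun x => g (x * b⁻¹) * I x) b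
    simpa only [mul_inv_cancel_right] using this
  rw [lintegral_congr h3, lintegral_lintegral_swap
    (((hg.comp (measurable_snd.mul measurable_fst.inv)).mul (hImeas.comp measurable_snd)
      : Measurable (Function.uncurry fun b x => g (x * b⁻¹) * I x)).aemeasurable)]
  have h4 : ∀ x : E, ∫⁻ b, g (x * b⁻¹) * I x ∂v
      = A.indicator (fun x => ∫⁻ b, g (x * b⁻¹) ∂v) x := by
    intro x
    by_cases hx : x ∈ A
    · simp [hI, Set.indicator_of_mem hx]
    · simp [hI, Set.indicator_of_notMem hx]
  rw [lintegral_congr h4, lintegral_indicator hA]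

end Aux
section Aux2

variable {E : Type*} [TopologicalSpace E] [Group E] [IsTopologicalGroup E]
    [SecondCountableTopology E] [MeasurableSpace E] [BorelSpace E]

lemma ae_of_rinv (π : Measure E) [SigmaFinite π] [π.IsMulRightInvariant]
    (v : Measure E) [IsFiniteMeasure v] {g : E → ℝ≥0∞} (hg : Measurable g) (r : ℝ)
    (heq : π.withDensity g = ENNReal.ofReal r • mconv (π.withDensity g) v) :
    g =ᵐ[π] fun x => ENNReal.ofReal r * ∫⁻ b, g (x * b⁻¹) ∂v := by
  have hGmeas : Measurable fun x => ∫⁻ b, g (x * b⁻¹) ∂v :=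
    Measurable.lintegral_prod_right (f := fun x b => g (x * b⁻¹))
      (hg.comp (measurable_fst.mul measurable_snd.inv))
  refine ae_eq_of_forall_setLIntegral_eq_of_sigmaFinite hg (measurable_const.mul hGmeas)
    fun s hs _ => ?_
  have h1 : ∫⁻ x in s, g x ∂π = π.withDensity g s := (withDensity_apply g hs).symm
  rw [h1, heq, Measure.smul_apply, smul_eq_mul,
    mconv_withDensity_apply π v hg hs, ← lintegral_const_mul' _ _ ofReal_ne_top]

lemma rinv_of_pointwise (π : Measure E) [SigmaFinite π] [π.IsMulRightInvariant]
    (v : Measure E) [IsFiniteMeasure v] {g : E → ℝ≥0∞} (hg : Measurable g) (r : ℝ)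
    (hid : ∀ x, g x = ENNReal.ofReal r * ∫⁻ b, g (x * b⁻¹) ∂v) :
    π.withDensity g = ENNReal.ofReal r • mconv (π.withDensity g) v := by
  ext A hA
  rw [withDensity_apply g hA, Measure.smul_apply, smul_eq_mul,
    mconv_withDensity_apply π v hg hA, ← lintegral_const_mul' _ _ ofReal_ne_top]
  exact setLIntegral_congr_fun hA (fun x _ => hid x)

end Aux2

theorem smoothed_density_rInvariant
    {E : Type*} [TopologicalSpace E] [Group E] [IsTopologicalGroup E]
    [LocallyCompactSpace E] [SecondCountableTopology E]
    [MeasurableSpace E] [BorelSpace E]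
    (π : Measure E) (hπ0 : π ≠ 0) (hπreg : π.Regular)
    (hπinv : π.IsMulRightInvariant)
    (v : Measure E) [IsProbabilityMeasure v]
    (r : ℝ) (hr : 0 < r)
    (h₁ : E → ℝ≥0∞) (hh₁meas : Measurable h₁)
    (hh₁loc : ∀ K : Set E, IsCompact K → ∫⁻ x in K, h₁ x ∂π < ∞)
    (hπ₀inv : IsRInvMeasure r v (π.withDensity h₁))
    (w : E → ℝ) (hwcont : Continuous w) (hwsupp : HasCompactSupport w)
    (hwpos : ∀ x, 0 ≤ w x) (hwne : ∃ x, w x ≠ 0) :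
    (∀ x, (∫⁻ y, ENNReal.ofReal (w y) * h₁ (y * x) ∂π) < ∞) ∧
      Continuous (fun x => ∫⁻ y, ENNReal.ofReal (w y) * h₁ (y * x) ∂π) ∧
      (∃ x, (∫⁻ y, ENNReal.ofReal (w y) * h₁ (y * x) ∂π) ≠ 0) ∧
      IsRInvMeasure r v
        (π.withDensity (fun x => ∫⁻ y, ENNReal.ofReal (w y) * h₁ (y * x) ∂π)) := by
  haveI : π.Regular := hπreg
  haveI : π.IsMulRightInvariant := hπinv
  haveI : NeZero π := ⟨hπ0⟩
  haveI : SigmaFinite π := inferInstance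
  set W : E → ℝ≥0∞ := fun y => ENNReal.ofReal (w y) with hWdef
  set h : E → ℝ≥0∞ := fun x => ∫⁻ y, W y * h₁ (y * x) ∂π with hhdef
  have hWmeas : Measurable W := ENNReal.measurable_ofReal.comp hwcont.measurable
  have hhmeas : Measurable h :=
    Measurable.lintegral_prod_right (f := fun x y => W y * h₁ (y * x))
      ((hWmeas.comp measurable_snd).mul (hh₁meas.comp (measurable_snd.mul measurable_fst)))
  set K : Set E := tsupport w with hKdef
  have hK : IsCompact K := hwsupp
  obtain ⟨C, hC⟩ : ∃ C : ℝ, ∀ y, w y ≤ C := by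
    obtain ⟨C, hC⟩ := hwcont.bounded_above_of_compact_support hwsupp
    exact ⟨C, fun y => le_trans (le_abs_self _) ((Real.norm_eq_abs _) ▸ hC y)⟩
  -- pointwise bound
  have hWC : ∀ y, W y ≤ ENNReal.ofReal C := fun y => ENNReal.ofReal_le_ofReal (hC y)
  have hW0 : ∀ y, y ∉ K → W y = 0 := fun y hy => by
    simp [hWdef, image_eq_zero_of_notMem_tsupport hy]
  -- alternate expression for h
  have hφeq : ∀ x, h x = ∫⁻ z, W (z * x⁻¹) * h₁ z ∂π := by
    intro x
    have := lintegral_mul_right_eq_self (μ := π) (fun z => W (z * x⁻¹) * h₁ z) x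
    show ∫⁻ y, W y * h₁ (y * x) ∂π = _
    simpa only [mul_inv_cancel_right] using this
  -- finiteness
  have hfin : ∀ x, h x < ∞ := by
    intro x
    set S : Set E := (fun z => z * x⁻¹) ⁻¹' K with hSdef
    have hSc : IsCompact S := by
      have hSeq : S = (fun k => k * x) '' K := by
        ext z
        constructor
        · intro hz
          exact ⟨z * x⁻¹, hz, by group⟩
        · rintro ⟨k, hk, rfl⟩
          show k * x * x⁻¹ ∈ K
          rwa [mul_inv_cancel_right]
      rw [hSeq]
      exact hK.image (continuous_mul_right x)
    have hSm : MeasurableSet S :=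
      ((isClosed_tsupport w).preimage (continuous_mul_right x⁻¹)).measurableSet
    have hb : ∀ y, W y * h₁ (y * x)
        ≤ ENNReal.ofReal C * S.indicator (fun _ => 1) (y * x) * h₁ (y * x) := by
      intro y
      by_cases hy : y ∈ K
      · have hyS : y * x ∈ S := by
          show y * x * x⁻¹ ∈ K
          rwa [mul_inv_cancel_right]
        rw [Set.indicator_of_mem hyS, mul_one]
        exact mul_le_mul_left (hWC y) _
      · simp [hW0 y hy]
    have h2 : h x ≤ ∫⁻ y,
        (fun z => ENNReal.ofReal C * S.indicator (fun _ => 1) z * h₁ z) (y * x) ∂π :=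
      lintegral_mono hb
    rw [lintegral_mul_right_eq_self
      (fun z => ENNReal.ofReal C * S.indicator (fun _ => 1) z * h₁ z) x] at h2
    have h3 : ∫⁻ z, ENNReal.ofReal C * S.indicator (fun _ => 1) z * h₁ z ∂π
        = ENNReal.ofReal C * ∫⁻ z in S, h₁ z ∂π := by
      rw [← lintegral_indicator hSm, ← lintegral_const_mul' (ENNReal.ofReal C) _ ofReal_ne_top]
      refine lintegral_congr fun z => ?_
      by_cases hz : z ∈ S
      · simp [Set.indicator_of_mem hz]
      · simp [Set.indicator_of_notMem hz]
    rw [h3] at h2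
    exact lt_of_le_of_lt h2 (ENNReal.mul_lt_top ofReal_lt_top (hh₁loc S hSc))
  -- a.e. finiteness of h₁
  have haefin : ∀ᵐ z ∂π, h₁ z < ∞ := by
    rw [ae_iff]
    have hT : MeasurableSet {z : E | ¬ h₁ z < ∞} := by
      have : {z : E | ¬ h₁ z < ∞} = h₁ ⁻¹' {∞} := by
        ext z
        simp [not_lt, top_le_iff]
      rw [this]
      exact hh₁meas (measurableSet_singleton _)
    have hsub : {z : E | ¬ h₁ z < ∞} ⊆ ⋃ n, ({z : E | ¬ h₁ z < ∞} ∩ compactCovering E n) := by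
      intro z hz
      obtain ⟨n, hn⟩ := exists_mem_compactCovering z
      exact Set.mem_iUnion.mpr ⟨n, hz, hn⟩
    refine measure_mono_null hsub (measure_iUnion_null fun n => ?_)
    have hfK := ae_lt_top hh₁meas (hh₁loc _ (isCompact_compactCovering E n)).ne
    have h0 := ae_iff.mp hfK
    rwa [Measure.restrict_apply hT] at h0
  -- continuity
  have hcont : Continuous h := by
    have hφcont : Continuous fun x => ∫⁻ z, W (z * x⁻¹) * h₁ z ∂π := by
      rw [continuous_iff_continuousAt]
      intro x₀
      obtain ⟨U, hUc, hUmem⟩ := exists_compact_mem_nhds x₀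
      set L : Set E := closure (K * U) with hLdef
      have hLc : IsCompact L := (hK.mul hUc).closure
      have hLm : MeasurableSet L := isClosed_closure.measurableSet
      refine tendsto_lintegral_filter_of_dominated_convergence
        (fun z => ENNReal.ofReal C * L.indicator (fun _ => 1) z * h₁ z) ?_ ?_ ?_ ?_
      · exact Filter.Eventually.of_forall fun x =>
          (hWmeas.comp (measurable_mul_const x⁻¹)).mul hh₁meas
      · filter_upwards [hUmem] with x hx
        refine Filter.Eventually.of_forall fun z => ?_
        by_cases hz : z * x⁻¹ ∈ K
        · have hzL : z ∈ L := by
            refine subset_closure ?_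
            have := Set.mul_mem_mul hz hx
            rwa [inv_mul_cancel_right] at this
          rw [Set.indicator_of_mem hzL, mul_one]
          exact mul_le_mul_left (hWC _) _
        · simp [hW0 _ hz]
      · have heq : ∫⁻ z, ENNReal.ofReal C * L.indicator (fun _ => 1) z * h₁ z ∂π
            = ENNReal.ofReal C * ∫⁻ z in L, h₁ z ∂π := by
          rw [← lintegral_indicator hLm,
            ← lintegral_const_mul' (ENNReal.ofReal C) _ ofReal_ne_top]
          refine lintegral_congr fun z => ?_
          by_cases hz : z ∈ L
          · simp [Set.indicator_of_mem hz]
          · simp [Set.indicator_of_notMem hz]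
        rw [heq]
        exact (ENNReal.mul_lt_top ofReal_lt_top (hh₁loc L hLc)).ne
      · filter_upwards [haefin] with z hz
        refine ENNReal.Tendsto.mul_const ?_ (Or.inr hz.ne)
        exact ((ENNReal.continuous_ofReal.comp
          (hwcont.comp (continuous_const.mul continuous_inv))).tendsto x₀)
    have hfun : (fun x => ∫⁻ z, W (z * x⁻¹) * h₁ z ∂π) = h :=
      funext fun x => (hφeq x).symm
    rwa [hfun] at hφcont
  -- nonvanishing
  have hInt0 : ∫⁻ x, h x ∂π ≠ 0 := by
    have hctrans : ∀ z : E, ∫⁻ x, W (z * x⁻¹) ∂π = ∫⁻ x, W x⁻¹ ∂π := by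
      intro z
      have h1 := lintegral_mul_right_eq_self (μ := π) (fun x => W (z * x⁻¹)) z
      rw [← h1]
      refine lintegral_congr fun x => ?_
      congr 1
      group
    have hint : ∫⁻ x, h x ∂π = (∫⁻ x, W x⁻¹ ∂π) * ∫⁻ z, h₁ z ∂π := by
      calc ∫⁻ x, h x ∂π = ∫⁻ x, ∫⁻ z, W (z * x⁻¹) * h₁ z ∂π ∂π := lintegral_congr hφeq
        _ = ∫⁻ z, ∫⁻ x, W (z * x⁻¹) * h₁ z ∂π ∂π := lintegral_lintegral_swap
            (((hWmeas.comp (measurable_snd.mul measurable_fst.inv)).mul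
              (hh₁meas.comp measurable_snd)
              : Measurable (Function.uncurry fun x z => W (z * x⁻¹) * h₁ z)).aemeasurable)
        _ = ∫⁻ z, (∫⁻ x, W (z * x⁻¹) ∂π) * h₁ z ∂π := by
            refine lintegral_congr fun z => ?_
            exact lintegral_mul_const (h₁ z)
              ((hWmeas.comp ((measurable_const_mul z).comp measurable_inv))
                : Measurable fun x => W (z * x⁻¹))
        _ = ∫⁻ z, (∫⁻ x, W x⁻¹ ∂π) * h₁ z ∂π := by
            refine lintegral_congr fun z => ?_
            rw [hctrans z]
        _ = (∫⁻ x, W x⁻¹ ∂π) * ∫⁻ z, h₁ z ∂π := lintegral_const_mul _ hh₁meas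
    have hc0 : (∫⁻ x, W x⁻¹ ∂π) ≠ 0 := by
      haveI : NeZero π.inv := by
        constructor
        intro hcontra
        apply hπ0
        have := congrArg Measure.inv hcontra
        rw [Measure.inv_inv] at this
        rw [this]
        simp [Measure.inv]
      have hWcont : Continuous W := ENNReal.continuous_ofReal.comp hwcont
      have hmap : ∫⁻ x, W x ∂π.inv = ∫⁻ x, W x⁻¹ ∂π :=
        lintegral_map hWmeas measurable_inv
      intro hc
      rw [← hmap] at hc
      have hW0' := (lintegral_eq_zero_of_isMulLeftInvariant (μ := π.inv) hWcont).mp hc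
      obtain ⟨x₀, hx₀⟩ := hwne
      have : W x₀ = 0 := congrFun hW0' x₀
      rw [hWdef] at this
      simp only [ENNReal.ofReal_eq_zero] at this
      exact hx₀ (le_antisymm this (hwpos x₀))
    have hh₁0 : ∫⁻ z, h₁ z ∂π ≠ 0 := by
      intro h0
      apply hπ₀inv.1
      have huniv : π.withDensity h₁ Set.univ = 0 := by
        rw [withDensity_apply _ MeasurableSet.univ, Measure.restrict_univ, h0]
      exact Measure.measure_univ_eq_zero.mp huniv
    rw [hint]
    exact mul_ne_zero hc0 hh₁0
  have hne : ∃ x, h x ≠ 0 := by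
    by_contra hcon
    push_neg at hcon
    apply hInt0
    calc ∫⁻ x, h x ∂π = ∫⁻ _, (0 : ℝ≥0∞) ∂π := lintegral_congr hcon
      _ = 0 := lintegral_zero
  -- r-invariance
  have hinv : IsRInvMeasure r v (π.withDensity h) := by
    have hae : h₁ =ᵐ[π] fun x => ENNReal.ofReal r * ∫⁻ b, h₁ (x * b⁻¹) ∂v :=
      ae_of_rinv π v hh₁meas r hπ₀inv.2
    have hid : ∀ x, h x = ENNReal.ofReal r * ∫⁻ b, h (x * b⁻¹) ∂v := by
      intro x
      have htend : Filter.Tendsto (fun y : E => y * x) (ae π) (ae π) :=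
        (measurePreserving_mul_right π x).quasiMeasurePreserving.tendsto_ae
      have hcomp := hae.comp_tendsto htend
      have hbmeas : ∀ y : E, Measurable fun b : E => h₁ ((y * x) * b⁻¹) := fun y =>
        hh₁meas.comp ((measurable_const_mul (y * x)).comp measurable_inv)
      calc h x = ∫⁻ y, W y * h₁ (y * x) ∂π := by rw [hhdef]
        _ = ∫⁻ y, W y * (ENNReal.ofReal r * ∫⁻ b, h₁ ((y * x) * b⁻¹) ∂v) ∂π := by
            refine lintegral_congr_ae ?_
            filter_upwards [hcomp] with y hy
            simp only [Function.comp_apply] at hy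
            rw [hy]
        _ = ∫⁻ y, ENNReal.ofReal r * ∫⁻ b, W y * h₁ ((y * x) * b⁻¹) ∂v ∂π := by
            refine lintegral_congr fun y => ?_
            rw [lintegral_const_mul (W y) (hbmeas y), mul_left_comm]
        _ = ENNReal.ofReal r * ∫⁻ y, ∫⁻ b, W y * h₁ ((y * x) * b⁻¹) ∂v ∂π :=
            lintegral_const_mul' _ _ ofReal_ne_top
        _ = ENNReal.ofReal r * ∫⁻ b, ∫⁻ y, W y * h₁ ((y * x) * b⁻¹) ∂π ∂v := by
            rw [lintegral_lintegral_swap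
              (((hWmeas.comp measurable_fst).mul (hh₁meas.comp
                ((measurable_fst.mul measurable_const).mul measurable_snd.inv))
                : Measurable (Function.uncurry
                    fun y b => W y * h₁ ((y * x) * b⁻¹))).aemeasurable)]
        _ = ENNReal.ofReal r * ∫⁻ b, h (x * b⁻¹) ∂v := by
            congr 1
            refine lintegral_congr fun b => ?_
            have : ∫⁻ y, W y * h₁ (y * (x * b⁻¹)) ∂π = h (x * b⁻¹) := by rw [hhdef]
            rw [← this]
            refine lintegral_congr fun y => ?_
            rw [mul_assoc]
    refine ⟨?_, rinv_of_pointwise π v hhmeas r hid⟩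
    intro h0
    apply hInt0
    have huniv : π.withDensity h Set.univ = 0 := by rw [h0]; rfl
    rwa [withDensity_apply _ MeasurableSet.univ, Measure.restrict_univ] at huniv
  exact ⟨hfin, hcont, hne, hinv⟩
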